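/- Let w be an overlap-free binary word with |w| ≥ 16, whose Restivo–Salemi factorization is w = u·μ(y)·v with y overlap-free and u,v ∈ {ε, 0, 1, 00, 11}. If v = aa for some letter a, then neither w·0 nor w·1 is overlap-free. -/

import Mathlib

/-- Thue–Morse morphism: μ(0)=01, μ(1)=10, encoding 0 = false, 1 = true. -/
def mu (w : List Bool) : List Bool := w.flatMap fun b => [b, !b]

/-- A word is an overlap if it has the form a·x·a·x·a for a letter a. -/
def IsOverlap (w : List Bool) : Prop :=
  ∃ (a : Bool) (x : List Bool), w = [a] ++ x ++ [a] ++ x ++ [a]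

/-- A word contains an overlap as a factor. -/
def HasOverlap (w : List Bool) : Prop := ∃ f, f <:+: w ∧ IsOverlap f

/-- A word is overlap-free if no factor is an overlap. -/
def OverlapFree (w : List Bool) : Prop := ∀ f, f <:+: w → ¬ IsOverlap f

lemma mu_append (s t : List Bool) : mu (s ++ t) = mu s ++ mu t := by
  simp [mu]

lemma mu_length (l : List Bool) : (mu l).length = 2 * l.length := by
  induction l with
  | nil => rfl
  | cons h t ih =>
    have e : mu (h :: t) = h :: (!h) :: mu t := rfl
    rw [e]; simp [ih]; omega

theorem stmt_9 (w u v y : List Bool) (a : Bool)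
    (hof : OverlapFree w) (hlen : 16 ≤ w.length)
    (hfac : w = u ++ mu y ++ v) (hy : OverlapFree y)
    (hu : u ∈ [([] : List Bool), [false], [true], [false, false], [true, true]])
    (hv : v ∈ [([] : List Bool), [false], [true], [false, false], [true, true]])
    (ha : v = [a, a]) :
    ∀ c : Bool, ¬ OverlapFree (w ++ [c]) := by
  subst ha
  clear hv
  have hul : u.length ≤ 2 := by
    simp at hu; rcases hu with rfl | rfl | rfl | rfl | rfl <;> simp
  have hyl : 2 ≤ y.length := by
    have h := congrArg List.length hfac
    simp [mu_length] at h
    omega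
  rcases hr : y.reverse with _ | ⟨b, t1⟩
  · have := congrArg List.length hr
    simp only [List.length_reverse, List.length_nil] at this; omega
  rcases t1 with _ | ⟨d, t⟩
  · have := congrArg List.length hr
    simp only [List.length_reverse, List.length_cons, List.length_nil] at this; omega
  have hy2 : y = t.reverse ++ [d, b] := by
    have := congrArg List.reverse hr; simpa using this
  rw [hy2, mu_append] at hfac
  have hmu2 : mu [d, b] = [d, !d, b, !b] := rfl
  rw [hmu2] at hfac
  have hb : b = a := by
    by_contra hb
    have hb' : b = !a := by cases a <;> cases b <;> simp_all
    apply hof [a, a, a]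
    · exact ⟨u ++ mu t.reverse ++ [d, !d, b], [], by simp [hfac, hb']⟩
    · exact ⟨a, [], by simp⟩
  rw [hb] at hfac
  have hd : d = !a := by
    by_contra hd
    have hd' : d = a := by cases a <;> cases d <;> simp_all
    apply hof [a, !a, a, !a, a]
    · exact ⟨u ++ mu t.reverse, [a], by simp [hfac, hd']⟩
    · exact ⟨a, [!a], by simp⟩
  rw [hd] at hfac
  simp only [Bool.not_not] at hfac
  intro c hc
  by_cases hca : c = a
  · apply hc [a, a, a]
    · exact ⟨u ++ mu t.reverse ++ [!a, a, a, !a], [], by simp [hfac, hca]⟩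
    · exact ⟨a, [], by simp⟩
  · have hc' : c = !a := by cases a <;> cases c <;> simp_all
    apply hc [!a, a, a, !a, a, a, !a]
    · exact ⟨u ++ mu t.reverse, [], by simp [hfac, hc']⟩
    · exact ⟨!a, [a, a], by simp⟩
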